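/- For the price-anticipating aggregator minimising a strictly convex increasing cost C applied hourly to total demand, ∑_h C(P_L(h) + P_F(h)), subject to ∑_h P_F(h) = E_tot and P_F(h) ≥ 0, any optimal solution makes the total demand P_L(h) + P_F(h) as flat as possible: if P_F(h1) > 0 and P_L(h1)+P_F(h1) > P_L(h2)+P_F(h2), the solution is not optimal. -/

import Mathlib

lemma pair_sum_aux {H : ℕ} (f g : Fin H → ℝ) (h1 h2 : Fin H) (hne : h1 ≠ h2)
    (hoff : ∀ h, h ≠ h1 → h ≠ h2 → f h = g h) :
    ∑ h, f h + (g h1 + g h2) = ∑ h, g h + (f h1 + f h2) := by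
  classical
  have hsub : ({h1, h2} : Finset (Fin H)) ⊆ Finset.univ := Finset.subset_univ _
  have hf := Finset.sum_sdiff (f := f) hsub
  have hg := Finset.sum_sdiff (f := g) hsub
  have hpf : ∑ h ∈ ({h1, h2} : Finset (Fin H)), f h = f h1 + f h2 :=
    Finset.sum_pair hne
  have hpg : ∑ h ∈ ({h1, h2} : Finset (Fin H)), g h = g h1 + g h2 :=
    Finset.sum_pair hne
  have hco : ∑ h ∈ Finset.univ \ ({h1, h2} : Finset (Fin H)), f h
      = ∑ h ∈ Finset.univ \ ({h1, h2} : Finset (Fin H)), g h := by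
    refine Finset.sum_congr rfl ?_
    intro h hh
    simp only [Finset.mem_sdiff, Finset.mem_insert, Finset.mem_singleton] at hh
    exact hoff h (fun e => hh.2 (Or.inl e)) (fun e => hh.2 (Or.inr e))
  linarith

theorem stmt_13 (H : ℕ) (P_L : Fin H → ℝ) (E_tot : ℝ) (hE : 0 ≤ E_tot)
    (C : ℝ → ℝ) (hC : StrictConvexOn ℝ Set.univ C)
    (P_F : Fin H → ℝ)
    (hfeas : (∀ h, 0 ≤ P_F h) ∧ ∑ h, P_F h = E_tot)
    (h1 h2 : Fin H)
    (hpos : 0 < P_F h1)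
    (hgt : P_L h2 + P_F h2 < P_L h1 + P_F h1) :
    ¬ (∀ Q : Fin H → ℝ, ((∀ h, 0 ≤ Q h) ∧ ∑ h, Q h = E_tot) →
        ∑ h, C (P_L h + P_F h) ≤ ∑ h, C (P_L h + Q h)) := by
  intro hopt
  set a := P_L h1 + P_F h1 with ha
  set b := P_L h2 + P_F h2 with hb
  have hab : b < a := hgt
  have hne : h1 ≠ h2 := by
    intro e; rw [ha, hb, e] at hab; exact lt_irrefl _ hab
  set ε : ℝ := min (P_F h1) ((a - b) / 2) with hεdef
  have hε0 : 0 < ε := lt_min hpos (by linarith)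
  have hε1 : ε ≤ P_F h1 := min_le_left _ _
  have hε2 : ε < a - b := lt_of_le_of_lt (min_le_right _ _) (by linarith)
  -- strict convexity inequality
  set t : ℝ := ε / (a - b) with htdef
  have hab0 : 0 < a - b := by linarith
  have ht0 : 0 < t := div_pos hε0 hab0
  have ht1 : t < 1 := (div_lt_one hab0).2 hε2
  have hta : t * (a - b) = ε := div_mul_cancel₀ ε (ne_of_gt hab0)
  have hkey : C (b + ε) + C (a - ε) < C b + C a := by
    have h1' := hC.2 (Set.mem_univ b) (Set.mem_univ a) (ne_of_lt hab)
      (by linarith : (0:ℝ) < 1 - t) ht0 (by ring)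
    have h2' := hC.2 (Set.mem_univ b) (Set.mem_univ a) (ne_of_lt hab)
      ht0 (by linarith : (0:ℝ) < 1 - t) (by ring)
    have e1 : (1 - t) • b + t • a = b + ε := by
      simp only [smul_eq_mul]; nlinarith
    have e2 : t • b + (1 - t) • a = a - ε := by
      simp only [smul_eq_mul]; nlinarith
    rw [e1] at h1'; rw [e2] at h2'
    simp only [smul_eq_mul] at h1' h2'
    nlinarith
  -- perturbed profile
  classical
  set Q : Fin H → ℝ := fun h =>
    if h = h1 then P_F h1 - ε else if h = h2 then P_F h2 + ε else P_F h with hQ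
  have hQ1 : Q h1 = P_F h1 - ε := by simp [hQ]
  have hQ2 : Q h2 = P_F h2 + ε := by simp [hQ, hne.symm]
  have hQoff : ∀ h, h ≠ h1 → h ≠ h2 → Q h = P_F h := by
    intro h e1 e2; simp [hQ, e1, e2]
  have hsumQ : ∑ h, Q h = E_tot := by
    have := pair_sum_aux Q P_F h1 h2 hne hQoff
    rw [hQ1, hQ2] at this
    linarith [hfeas.2]
  have hQnn : ∀ h, 0 ≤ Q h := by
    intro h
    by_cases e1 : h = h1
    · rw [e1, hQ1]; linarith
    by_cases e2 : h = h2
    · rw [e2, hQ2]; linarith [hfeas.1 h2]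
    · rw [hQoff h e1 e2]; exact hfeas.1 h
  have hle := hopt Q ⟨hQnn, hsumQ⟩
  have hcost := pair_sum_aux (fun h => C (P_L h + Q h)) (fun h => C (P_L h + P_F h))
    h1 h2 hne (by intro h e1 e2; show C (P_L h + Q h) = C (P_L h + P_F h); rw [hQoff h e1 e2])
  simp only [hQ1, hQ2] at hcost
  have ea : P_L h1 + (P_F h1 - ε) = a - ε := by rw [ha]; ring
  have eb : P_L h2 + (P_F h2 + ε) = b + ε := by rw [hb]; ring
  rw [ea, eb] at hcost
  have : ∑ h, C (P_L h + Q h) < ∑ h, C (P_L h + P_F h) := by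
    have := hcost
    simp only [← ha, ← hb] at this
    linarith
  linarith
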